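/- arXiv:2108.00534 — 2 statements merged into one kernel-verified Lean document; each statement's English description precedes it below -/
import Mathlib

section
/- For all λ ∈ [0,1]: ∫_0^1 E( 4λr / (λ+r)² ) · (λ+r) · r / √(1−r²) dr = (π²/8) ( λ²/2 + 1 ). -/
open MeasureTheory Real

/-- The complete elliptic integral of the second kind,
`E(z) = ∫₀^{π/2} √(1 - z sin²θ) dθ`. -/
noncomputable def ellipticE (z : ℝ) : ℝ :=
  ∫ θ in Set.Ioo (0 : ℝ) (Real.pi / 2), Real.sqrt (1 - z * Real.sin θ ^ 2)

section Aux
open Set intervalIntegral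


lemma abs_cos_int : ∫ β in (-π)..π, |Real.cos β| = 4 := by
  have h1 : ∫ β in (-(π/2))..(π/2), |Real.cos β| = 2 := by
    rw [integral_congr (g := Real.cos)]
    · rw [integral_cos]; norm_num
    · intro x hx
      rw [uIcc_of_le (by linarith [pi_pos])] at hx
      exact abs_of_nonneg (Real.cos_nonneg_of_mem_Icc (by simpa using hx))
  have h2 : ∫ β in (π/2)..π, |Real.cos β| = 1 := by
    rw [integral_congr (g := fun x => -Real.cos x)]
    · rw [intervalIntegral.integral_neg, integral_cos]; simp
    · intro x hx
      rw [uIcc_of_le (by linarith [pi_pos])] at hx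
      exact abs_of_nonpos (Real.cos_nonpos_of_pi_div_two_le_of_le hx.1 (by linarith [hx.2, pi_pos]))
  have h3 : ∫ β in (-π)..(-(π/2)), |Real.cos β| = 1 := by
    have := intervalIntegral.integral_comp_neg (a := π/2) (b := π) (fun x => |Real.cos x|)
    simp only [Real.cos_neg] at this
    rw [← this, h2]
  have ic : ∀ a b : ℝ, IntervalIntegrable (fun x => |Real.cos x|) volume a b :=
    fun a b => (Real.continuous_cos.abs).intervalIntegrable a b
  rw [← integral_add_adjacent_intervals (ic (-π) (-(π/2))) (ic (-(π/2)) π), h3,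
    ← integral_add_adjacent_intervals (ic (-(π/2)) (π/2)) (ic (π/2) π), h1, h2]
  norm_num



lemma cauchy_formula (a b : ℝ) :
    Real.sqrt (a^2 + b^2) = (1/4) * ∫ β in (-π)..π, |a * Real.cos β + b * Real.sin β| := by
  by_cases h : a = 0 ∧ b = 0
  · obtain ⟨rfl, rfl⟩ := h; simp
  · set z : ℂ := ⟨a, b⟩ with hz
    have hz0 : z ≠ 0 := by
      simp only [ne_eq, Complex.ext_iff, Complex.zero_re, Complex.zero_im, hz]
      tauto
    set R := Real.sqrt (a^2 + b^2) with hR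
    have hRz : ‖z‖ = R := by
      rw [Complex.norm_def, Complex.normSq_mk]; ring_nf; exact hR.symm
    have ha : a = R * Real.cos z.arg := by
      rw [Complex.cos_arg hz0, hRz]
      have hR0 : R ≠ 0 := by simpa [hRz] using (norm_ne_zero_iff.mpr hz0)
      field_simp; rfl
    have hb : b = R * Real.sin z.arg := by
      rw [Complex.sin_arg, hRz]
      have hR0 : R ≠ 0 := by simpa [hRz] using (norm_ne_zero_iff.mpr hz0)
      field_simp; rfl
    have key : ∀ β : ℝ, |a * Real.cos β + b * Real.sin β| = R * |Real.cos (β - z.arg)| := by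
      intro β
      have e : a * Real.cos β + b * Real.sin β = R * Real.cos (β - z.arg) := by
        rw [Real.cos_sub]; nth_rewrite 1 [ha, hb]; ring
      rw [e, abs_mul, abs_of_nonneg (Real.sqrt_nonneg _)]
    simp_rw [key]
    rw [intervalIntegral.integral_const_mul]
    have per : Function.Periodic (fun x => |Real.cos x|) (2*π) :=
      (Real.cos_periodic).comp abs
    have shift : ∫ β in (-π)..π, |Real.cos (β - z.arg)| = ∫ β in (-π)..π, |Real.cos β| := by
    
      rw [intervalIntegral.integral_comp_sub_right (fun x => |Real.cos x|) z.arg]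
      have h1 := per.intervalIntegral_add_eq (-π - z.arg) (-π)
      have e1 : -π - z.arg + 2*π = π - z.arg := by ring
      have e2 : -π + 2*π = π := by ring
      rw [e1, e2] at h1
      exact h1
    rw [shift, abs_cos_int]; ring



lemma hasDerivAt_asin {x : ℝ} (hx : x ∈ Ioo (-1:ℝ) 1) :
    HasDerivAt Real.arcsin (1 / Real.sqrt (1 - x^2)) x := by
  have h := Real.hasDerivAt_arcsin (by linarith [hx.1] : x ≠ -1) (by linarith [hx.2] : x ≠ 1)
  simpa [one_div] using h

lemma integrableOn_inv_sqrt_one_sub_sq :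
    IntegrableOn (fun t : ℝ => 1 / Real.sqrt (1 - t^2)) (Ioc (-1) 1) := by
  apply intervalIntegral.integrableOn_deriv_of_nonneg (g := Real.arcsin)
  · exact Real.continuous_arcsin.continuousOn
  · exact fun x hx => hasDerivAt_asin hx
  · intro x hx; positivity

lemma integral_inv_sqrt_one_sub_sq :
    ∫ t in (-1:ℝ)..1, 1 / Real.sqrt (1 - t^2) = π := by
  have key := intervalIntegral.integral_eq_sub_of_hasDeriv_right_of_le (a := -1) (b := 1)
    (f := Real.arcsin) (f' := fun t => 1 / Real.sqrt (1 - t^2)) (by norm_num)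
    Real.continuous_arcsin.continuousOn
    (fun x hx => (hasDerivAt_asin hx).hasDerivWithinAt)
    ((intervalIntegrable_iff_integrableOn_Ioc_of_le (by norm_num)).mpr
      integrableOn_inv_sqrt_one_sub_sq)
  rw [key, Real.arcsin_one, Real.arcsin_neg_one]; ring

lemma integrableOn_w : IntegrableOn (fun r : ℝ => r / Real.sqrt (1 - r^2)) (Ioc 0 1) := by
  apply intervalIntegral.integrableOn_deriv_of_nonneg (g := fun r => -Real.sqrt (1 - r^2))
  · exact (Real.continuous_sqrt.comp (by continuity)).continuousOn.neg
  · intro x hx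
    have h1 : (0:ℝ) < 1 - x^2 := by nlinarith [hx.1, hx.2]
    have hs : Real.sqrt (1 - x^2) ≠ 0 := ne_of_gt (Real.sqrt_pos.mpr h1)
    have h : HasDerivAt (fun r : ℝ => 1 - r^2) (-(2*x)) x := by
      simpa using ((hasDerivAt_pow 2 x).const_sub 1)
    have h2 := (h.sqrt (by linarith)).neg
    refine h2.congr_deriv ?_
    rw [neg_div, neg_neg, mul_div_mul_left _ _ two_ne_zero]
  · intro x hx
    exact div_nonneg (le_of_lt hx.1) (Real.sqrt_nonneg _)

lemma integral_abs_lin (c : ℝ) (hc : |c| ≤ 1) :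
    ∫ t in (-1:ℝ)..1, |c + t| = c^2 + 1 := by
  rw [abs_le] at hc
  have h1 : (-1:ℝ) ≤ -c := by linarith [hc.2]
  have h2 : -c ≤ 1 := by linarith [hc.1]
  have ic : ∀ a b : ℝ, IntervalIntegrable (fun t => |c + t|) volume a b :=
    fun a b => (continuous_const.add continuous_id).abs.intervalIntegrable a b
  rw [← integral_add_adjacent_intervals (ic (-1) (-c)) (ic (-c) 1)]
  have e1 : ∫ t in (-1:ℝ)..(-c), |c + t| = ∫ t in (-1:ℝ)..(-c), -(c + t) := by
    apply integral_congr; intro x hx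
    rw [uIcc_of_le h1] at hx
    exact abs_of_nonpos (by linarith [hx.2])
  have e2 : ∫ t in (-c:ℝ)..1, |c + t| = ∫ t in (-c:ℝ)..1, (c + t) := by
    apply integral_congr; intro x hx
    rw [uIcc_of_le h2] at hx
    exact abs_of_nonneg (by linarith [hx.1])
  have iadd : ∀ a b : ℝ, ∫ t in a..b, (c+t) = c * (b-a) + (b^2 - a^2)/2 := by
    intro a b
    rw [intervalIntegral.integral_add intervalIntegrable_const
      intervalIntegral.intervalIntegrable_id, integral_id,
      intervalIntegral.integral_const, smul_eq_mul, mul_comm]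
  rw [e1, e2, intervalIntegral.integral_neg, iadd, iadd]; ring



lemma finRestrict (a b : ℝ) : IsFiniteMeasure (volume.restrict (Ioc a b)) :=
  ⟨by rw [Measure.restrict_apply_univ]; exact measure_Ioc_lt_top⟩

lemma swap_square (f : ℝ → ℝ → ℝ) (hf : Continuous (Function.uncurry f))
    (M : ℝ) (hM : ∀ x y, |f x y| ≤ M) :
    ∫ x in (-π)..π, (∫ y in (-π)..π, f x y) = ∫ y in (-π)..π, ∫ x in (-π)..π, f x y := by
  have hle : (-π) ≤ π := by linarith [pi_pos]
  have : IsFiniteMeasure (volume.restrict (Ioc (-π) π)) := finRestrict _ _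
  simp_rw [intervalIntegral.integral_of_le hle]
  apply MeasureTheory.integral_integral_swap
  apply Integrable.mono' (integrable_const M) hf.aestronglyMeasurable
  filter_upwards with p
  exact hM p.1 p.2

lemma shift_per (g : ℝ → ℝ) (hg : Continuous g) (hper : Function.Periodic g (2*π)) (β : ℝ) :
    ∫ φ in (-π)..π, g (φ - β) = ∫ φ in (-π)..π, g φ := by
  rw [intervalIntegral.integral_comp_sub_right g β]
  have h1 := hper.intervalIntegral_add_eq (-π - β) (-π)
  have e1 : -π - β + 2*π = π - β := by ring
  have e2 : -π + 2*π = π := by ring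
  rw [e1, e2] at h1
  exact h1

lemma step2 (l r : ℝ) :
    ∫ φ in (-π)..π, Real.sqrt (l^2 + r^2 + 2*l*r*Real.cos φ)
      = (1/4) * ∫ β in (-π)..π, ∫ φ in (-π)..π, |l*Real.cos β + r*Real.cos φ| := by
  have key : ∀ φ : ℝ, Real.sqrt (l^2 + r^2 + 2*l*r*Real.cos φ)
      = (1/4) * ∫ β in (-π)..π, |l*Real.cos β + r*Real.cos (φ - β)| := by
    intro φ
    have h1 : l^2+r^2+2*l*r*Real.cos φ = (l + r*Real.cos φ)^2 + (r*Real.sin φ)^2 := by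
      nlinarith [Real.sin_sq_add_cos_sq φ]
    rw [h1, cauchy_formula]
    congr 1
    apply intervalIntegral.integral_congr
    intro β _
    show |(l + r * Real.cos φ) * Real.cos β + r*Real.sin φ * Real.sin β|
        = |l*Real.cos β + r*Real.cos (φ - β)|
    rw [Real.cos_sub]
    congr 1
    ring
  simp_rw [key]
  rw [intervalIntegral.integral_const_mul]
  congr 1
  have hsw := swap_square (fun φ β => |l*Real.cos β + r*Real.cos (φ - β)|)
    (by fun_prop) (|l| + |r|) (fun φ β => by
      calc |(|l*Real.cos β + r*Real.cos (φ - β)|)| = |l*Real.cos β + r*Real.cos (φ - β)| := abs_abs _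
      _ ≤ |l*Real.cos β| + |r*Real.cos (φ - β)| := abs_add_le _ _
      _ ≤ |l| + |r| := by
          rw [abs_mul, abs_mul]
          have h1 := abs_cos_le_one β
          have h2 := abs_cos_le_one (φ - β)
          nlinarith [abs_nonneg l, abs_nonneg r])
  rw [hsw]
  have hsh : ∀ β : ℝ, (∫ φ in (-π)..π, |l*Real.cos β + r*Real.cos (φ - β)|)
      = ∫ φ in (-π)..π, |l*Real.cos β + r*Real.cos φ| := by
    intro β
    exact shift_per (fun u => |l*Real.cos β + r*Real.cos u|) (by fun_prop)
      (fun x => by simp [Real.cos_add_two_pi]) β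
  simp_rw [hsh]



lemma sqrt_sub_sq_eq (a y : ℝ) (ha : 0 < a) :
    Real.sqrt (a^2 - y^2) = a * Real.sqrt (1 - (y/a)^2) := by
  have h : a^2 - y^2 = a^2 * (1 - (y/a)^2) := by field_simp
  rw [h, Real.sqrt_mul (sq_nonneg a), Real.sqrt_sq ha.le]

lemma hasDerivAt_asin' {a x : ℝ} (ha : 0 < a) (hx : x ∈ Ioo (-a) a) :
    HasDerivAt (fun y => Real.arcsin (y/a)) (1 / Real.sqrt (a^2 - x^2)) x := by
  have hxa : x / a ∈ Ioo (-1:ℝ) 1 := by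
    constructor
    · rw [lt_div_iff₀ ha]; nlinarith [hx.1]
    · rw [div_lt_one ha]; exact hx.2
  have h1 : HasDerivAt (fun y : ℝ => y / a) (1/a) x := by
    simpa using (hasDerivAt_id x).div_const a
  have h2 := (Real.hasDerivAt_arcsin (ne_of_gt hxa.1) (ne_of_lt hxa.2)).comp x h1
  rw [show (1 / Real.sqrt (a^2 - x^2)) = 1 / Real.sqrt (1 - (x/a)^2) * (1/a) from ?_]
  · exact h2
  rw [sqrt_sub_sq_eq a x ha]
  have hs : Real.sqrt (1 - (x/a)^2) ≠ 0 := by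
    refine ne_of_gt (Real.sqrt_pos.mpr ?_)
    nlinarith [hxa.1, hxa.2]
  rw [div_mul_div_comm, one_mul, mul_comm]

lemma integrableOn_arc (a : ℝ) (ha : 0 < a) :
    IntegrableOn (fun y : ℝ => 1 / Real.sqrt (a^2 - y^2)) (Ioc (-a) a) := by
  apply intervalIntegral.integrableOn_deriv_of_nonneg (g := fun y => Real.arcsin (y/a))
  · exact Real.continuous_arcsin.comp (continuous_id.div_const a) |>.continuousOn
  · exact fun x hx => hasDerivAt_asin' ha hx
  · intro x hx; positivity

lemma integral_arc (a : ℝ) (ha : 0 < a) :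
    ∫ y in Ioc (-a) a, 1 / Real.sqrt (a^2 - y^2) = π := by
  rw [← intervalIntegral.integral_of_le (by linarith)]
  have key := intervalIntegral.integral_eq_sub_of_hasDeriv_right_of_le (a := -a) (b := a)
    (f := fun y => Real.arcsin (y/a)) (f' := fun y => 1 / Real.sqrt (a^2 - y^2)) (by linarith)
    (Real.continuous_arcsin.comp (continuous_id.div_const a)).continuousOn
    (fun x hx => (hasDerivAt_asin' ha hx).hasDerivWithinAt)
    ((intervalIntegrable_iff_integrableOn_Ioc_of_le (by linarith)).mpr (integrableOn_arc a ha))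
  rw [key]
  show Real.arcsin (a/a) - Real.arcsin (-a/a) = π
  rw [div_self (ne_of_gt ha), show -a/a = -1 by field_simp, Real.arcsin_one,
    Real.arcsin_neg_one]; ring

-- slice integral over all of ℝ
lemma integral_arc_real (a : ℝ) (ha : 0 < a) :
    ∫ y : ℝ, 1 / Real.sqrt (a^2 - y^2) = π ∧
    Integrable (fun y : ℝ => 1 / Real.sqrt (a^2 - y^2)) := by
  have hz : ∀ y : ℝ, y ∉ Ioc (-a) a → 1 / Real.sqrt (a^2 - y^2) = 0 := by
    intro y hy
    simp only [mem_Ioc, not_and_or, not_lt, not_le] at hy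
    have : a^2 - y^2 ≤ 0 := by rcases hy with h | h <;> nlinarith
    rw [Real.sqrt_eq_zero_of_nonpos this, div_zero]
  have heq : (fun y : ℝ => 1 / Real.sqrt (a^2 - y^2))
      = (Ioc (-a) a).indicator (fun y => 1 / Real.sqrt (a^2 - y^2)) := by
    ext y
    by_cases hy : y ∈ Ioc (-a) a
    · rw [indicator_of_mem hy]
    · rw [indicator_of_notMem hy, hz y hy]
  constructor
  · rw [heq, MeasureTheory.integral_indicator measurableSet_Ioc]
    exact integral_arc a ha
  · rw [heq]
    exact (integrableOn_arc a ha).integrable_indicator measurableSet_Ioc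



lemma polar_eval (c : ℝ) (hc : |c| ≤ 1) :
    ∫ r in Ioo (0:ℝ) 1, (r / Real.sqrt (1 - r^2)) * ∫ φ in Ioo (-π) π, |c + r * Real.cos φ|
      = π * (c^2 + 1) := by
  set f : ℝ × ℝ → ℝ := fun x => |c + x.1| / Real.sqrt (1 - x.1^2 - x.2^2) with hf
  set g : ℝ × ℝ → ℝ := fun p => (p.1 / Real.sqrt (1 - p.1^2)) * |c + p.1 * Real.cos p.2|
    with hg
  -- measurability
  have hmf : Measurable f := by
    apply Measurable.div
    · fun_prop
    · fun_prop
  have hmg : Measurable g := by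
    apply Measurable.mul
    · apply Measurable.div <;> fun_prop
    · fun_prop
  -- slices of f
  have hslice0 : ∀ x : ℝ, x ∉ Ioo (-1:ℝ) 1 → (fun y => f (x, y)) = (fun _ => (0:ℝ)) := by
    intro x hx
    ext y
    simp only [mem_Ioo, not_and_or, not_lt] at hx
    have h0 : 1 - x^2 - y^2 ≤ 0 := by rcases hx with h | h <;> nlinarith
    show |c + x| / Real.sqrt (1 - x^2 - y^2) = 0
    rw [Real.sqrt_eq_zero_of_nonpos h0, div_zero]
  have hslice1 : ∀ x ∈ Ioo (-1:ℝ) 1, (fun y => f (x, y))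
      = fun y => |c + x| * (1 / Real.sqrt ((Real.sqrt (1 - x^2))^2 - y^2)) := by
    intro x hx
    have h1 : (0:ℝ) < 1 - x^2 := by nlinarith [hx.1, hx.2]
    ext y
    show |c + x| / Real.sqrt (1 - x^2 - y^2) = _
    rw [Real.sq_sqrt h1.le]
    rw [show (1:ℝ) - x^2 - y^2 = (1 - x^2) - y^2 by ring]
    rw [mul_one_div]
  have hc1 : ∀ x : ℝ, Integrable (fun y => f (x, y)) := by
    intro x
    by_cases hx : x ∈ Ioo (-1:ℝ) 1
    · rw [hslice1 x hx]
      have h1 : (0:ℝ) < 1 - x^2 := by nlinarith [hx.1, hx.2]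
      exact ((integral_arc_real _ (Real.sqrt_pos.mpr h1)).2).const_mul _
    · rw [hslice0 x hx]
      exact integrable_zero _ _ _
  have hfnn : ∀ p : ℝ × ℝ, 0 ≤ f p := fun p => div_nonneg (abs_nonneg _) (Real.sqrt_nonneg _)
  have hsliceint : (fun x => ∫ y, f (x, y))
      = (Ioo (-1:ℝ) 1).indicator (fun x => π * |c + x|) := by
    ext x
    by_cases hx : x ∈ Ioo (-1:ℝ) 1
    · rw [indicator_of_mem hx, hslice1 x hx]
      have h1 : (0:ℝ) < 1 - x^2 := by nlinarith [hx.1, hx.2]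
      rw [MeasureTheory.integral_const_mul, (integral_arc_real _ (Real.sqrt_pos.mpr h1)).1]
      ring
    · rw [indicator_of_notMem hx, hslice0 x hx, MeasureTheory.integral_zero]
  have hind : Integrable ((Ioo (-1:ℝ) 1).indicator (fun x => π * |c + x|)) := by
    apply IntegrableOn.integrable_indicator _ measurableSet_Ioo
    exact (continuous_const.mul (continuous_const.add continuous_id).abs).integrableOn_Icc.mono_set
      Ioo_subset_Icc_self
  -- integrability of f on the plane
  have hfint : Integrable f (volume.prod volume) := by
    refine (MeasureTheory.integrable_prod_iff hmf.aestronglyMeasurable).2 ⟨?_, ?_⟩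
    · filter_upwards with x; exact hc1 x
    · have he : (fun x => ∫ y, ‖f (x, y)‖) = fun x => ∫ y, f (x, y) := by
        ext x; congr 1; ext y; exact Real.norm_of_nonneg (hfnn _)
      rw [he, hsliceint]; exact hind
  -- value of the plane integral
  have hval : ∫ p, f p = π * (c^2 + 1) := by
    rw [Measure.volume_eq_prod, MeasureTheory.integral_prod f hfint, hsliceint,
      MeasureTheory.integral_indicator measurableSet_Ioo,
      ← MeasureTheory.integral_Ioc_eq_integral_Ioo,
      ← intervalIntegral.integral_of_le (by norm_num : (-1:ℝ) ≤ 1),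
      intervalIntegral.integral_const_mul, integral_abs_lin c hc]
  -- the polar-coordinates side
  have hsymm : ∀ p : ℝ × ℝ, polarCoord.symm p = (p.1 * Real.cos p.2, p.1 * Real.sin p.2) :=
    fun p => rfl
  have hgf : ∀ p : ℝ × ℝ, p.1 • f (polarCoord.symm p) = g p := by
    intro p
    rw [hsymm]
    show p.1 • (|c + (p.1 * Real.cos p.2)|
      / Real.sqrt (1 - (p.1*Real.cos p.2)^2 - (p.1*Real.sin p.2)^2)) = _
    have h1 : 1 - (p.1*Real.cos p.2)^2 - (p.1*Real.sin p.2)^2 = 1 - p.1^2 := by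
      nlinarith [Real.sin_sq_add_cos_sq p.2]
    rw [h1, smul_eq_mul, hg]
    ring
  -- integrability of g on the box
  have hwint : Integrable (fun r : ℝ => r / Real.sqrt (1 - r^2))
      (volume.restrict (Ioo 0 1)) := integrableOn_w.mono_set Ioo_subset_Ioc_self
  have hfin : IsFiniteMeasure (volume.restrict (Ioo (-π) π)) :=
    ⟨by rw [Measure.restrict_apply_univ]; exact measure_Ioo_lt_top⟩
  have hIg : Integrable g ((volume.restrict (Ioo 0 1)).prod (volume.restrict (Ioo (-π) π))) := by
    have hdom : Integrable (fun p : ℝ × ℝ => (p.1 / Real.sqrt (1 - p.1^2)) * 2)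
        ((volume.restrict (Ioo 0 1)).prod (volume.restrict (Ioo (-π) π))) :=
      Integrable.mul_prod hwint (integrable_const 2)
    refine hdom.mono' hmg.aestronglyMeasurable ?_
    rw [Measure.prod_restrict]
    filter_upwards [ae_restrict_mem (measurableSet_Ioo.prod measurableSet_Ioo)] with p hp
    obtain ⟨hp1, _⟩ := hp
    have h0 : 0 < p.1 := hp1.1
    have h1 : p.1 < 1 := hp1.2
    have hwnn : 0 ≤ p.1 / Real.sqrt (1 - p.1^2) := div_nonneg h0.le (Real.sqrt_nonneg _)
    have habs : |c + p.1 * Real.cos p.2| ≤ 2 := by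
      have := abs_cos_le_one p.2
      have h2 : |p.1 * Real.cos p.2| ≤ 1 := by
        rw [abs_mul, abs_of_pos h0]
        nlinarith
      calc |c + p.1 * Real.cos p.2| ≤ |c| + |p.1 * Real.cos p.2| := abs_add_le _ _
        _ ≤ 2 := by linarith [hc]
    show ‖g p‖ ≤ _
    rw [hg, Real.norm_of_nonneg (mul_nonneg hwnn (abs_nonneg _))]
    exact mul_le_mul_of_nonneg_left habs hwnn
  have hIg' : IntegrableOn g (Ioo (0:ℝ) 1 ×ˢ Ioo (-π) π) volume := by
    rw [IntegrableOn, Measure.volume_eq_prod, ← Measure.prod_restrict]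
    exact hIg
  -- g vanishes on the outer part
  have hgz : ∀ p : ℝ × ℝ, p ∈ (Ici (1:ℝ)) ×ˢ Ioo (-π) π → g p = 0 := by
    intro p hp
    have h1 : (1:ℝ) ≤ p.1 := hp.1
    have h0 : 1 - p.1^2 ≤ 0 := by nlinarith
    show (p.1 / Real.sqrt (1 - p.1^2)) * |c + p.1 * Real.cos p.2| = 0
    rw [Real.sqrt_eq_zero_of_nonpos h0, div_zero, zero_mul]
  -- assemble
  have htar : polarCoord.target = (Ioo (0:ℝ) 1 ∪ Ici 1) ×ˢ Ioo (-π) π := by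
    rw [Ioo_union_Ici_eq_Ioi zero_lt_one]; rfl
  have hdisj : Disjoint ((Ioo (0:ℝ) 1) ×ˢ Ioo (-π) π) ((Ici (1:ℝ)) ×ˢ Ioo (-π) π) := by
    apply Disjoint.set_prod_left
    rw [Set.disjoint_left]
    intro x hx hx'
    exact absurd hx' (not_le.mpr hx.2)
  have hIz : IntegrableOn g ((Ici (1:ℝ)) ×ˢ Ioo (-π) π) volume := by
    apply (integrableOn_zero (ε' := ℝ)).congr_fun (fun p hp => (hgz p hp).symm)
    exact measurableSet_Ici.prod measurableSet_Ioo
  have hsplit : ∫ p in polarCoord.target, g p = ∫ p in (Ioo (0:ℝ) 1) ×ˢ Ioo (-π) π, g p := by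
    rw [htar, union_prod, MeasureTheory.setIntegral_union hdisj
      (measurableSet_Ici.prod measurableSet_Ioo) hIg' hIz,
      MeasureTheory.setIntegral_eq_zero_of_forall_eq_zero hgz, add_zero]
  have hiter : ∫ p in (Ioo (0:ℝ) 1) ×ˢ Ioo (-π) π, g p
      = ∫ r in Ioo (0:ℝ) 1, ∫ φ in Ioo (-π) π, g (r, φ) := by
    rw [Measure.volume_eq_prod]
    exact MeasureTheory.setIntegral_prod g (by rwa [IntegrableOn, ← Measure.prod_restrict])
  have hpolar := integral_comp_polarCoord_symm f
  have hcongr : ∫ p in polarCoord.target, p.1 • f (polarCoord.symm p)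
      = ∫ p in polarCoord.target, g p := by
    apply MeasureTheory.setIntegral_congr_fun
    · rw [htar]
      exact ((measurableSet_Ioo.union measurableSet_Ici).prod measurableSet_Ioo)
    · exact fun p _ => hgf p
  calc ∫ r in Ioo (0:ℝ) 1, (r / Real.sqrt (1 - r^2)) * ∫ φ in Ioo (-π) π, |c + r * Real.cos φ|
      = ∫ r in Ioo (0:ℝ) 1, ∫ φ in Ioo (-π) π, g (r, φ) := by
        apply MeasureTheory.setIntegral_congr_fun measurableSet_Ioo
        intro r _
        show r / Real.sqrt (1 - r^2) * ∫ φ in Ioo (-π) π, |c + r * Real.cos φ|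
          = ∫ φ in Ioo (-π) π, g (r, φ)
        rw [← MeasureTheory.integral_const_mul]
    _ = ∫ p in (Ioo (0:ℝ) 1) ×ˢ Ioo (-π) π, g p := hiter.symm
    _ = ∫ p in polarCoord.target, g p := hsplit.symm
    _ = ∫ p in polarCoord.target, p.1 • f (polarCoord.symm p) := hcongr.symm
    _ = ∫ p, f p := hpolar
    _ = π * (c^2 + 1) := hval




lemma step1 (l r : ℝ) (hl : 0 ≤ l) (hr : 0 < r) :
    ellipticE (4*l*r/(l+r)^2) * (l+r)
      = (1/4) * ∫ φ in (-π)..π, Real.sqrt (l^2 + r^2 + 2*l*r*Real.cos φ) := by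
  have hlr : (0:ℝ) < l + r := by linarith
  have hlr2 : (l+r)^2 ≠ 0 := by positivity
  -- a) as interval integral
  have ha : ellipticE (4*l*r/(l+r)^2)
      = ∫ θ in (0:ℝ)..(π/2), Real.sqrt (1 - (4*l*r/(l+r)^2) * Real.sin θ ^ 2) := by
    rw [ellipticE, intervalIntegral.integral_of_le (by positivity : (0:ℝ) ≤ π/2),
      MeasureTheory.integral_Ioc_eq_integral_Ioo]
  -- b) multiply inside
  have hb : ∀ θ : ℝ, Real.sqrt (1 - (4*l*r/(l+r)^2) * Real.sin θ ^ 2) * (l+r)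
      = Real.sqrt (l^2 + r^2 + 2*l*r*Real.cos (2*θ)) := by
    intro θ
    have hcos : Real.cos (2*θ) = 1 - 2*Real.sin θ^2 := by
      rw [Real.cos_two_mul, ← Real.sin_sq_add_cos_sq θ]; ring
    rw [hcos, ← Real.sqrt_sq hlr.le, ← Real.sqrt_mul' _ (sq_nonneg (l+r))]
    congr 1
    field_simp
    rw [Real.sq_sqrt (sq_nonneg (l+r))]; ring
  rw [ha, ← intervalIntegral.integral_mul_const]
  simp_rw [hb]
  -- c) substitution φ = 2θ
  have hc : ∫ θ in (0:ℝ)..(π/2), Real.sqrt (l^2 + r^2 + 2*l*r*Real.cos (2*θ))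
      = (1/2) * ∫ φ in (0:ℝ)..π, Real.sqrt (l^2 + r^2 + 2*l*r*Real.cos φ) := by
    rw [intervalIntegral.integral_comp_mul_left
      (fun φ => Real.sqrt (l^2 + r^2 + 2*l*r*Real.cos φ)) (two_ne_zero),
      show (2:ℝ)*(π/2) = π by ring, mul_zero]
    simp [smul_eq_mul]
  -- d) evenness
  have hd : ∫ φ in (-π)..(0:ℝ), Real.sqrt (l^2 + r^2 + 2*l*r*Real.cos φ)
      = ∫ φ in (0:ℝ)..π, Real.sqrt (l^2 + r^2 + 2*l*r*Real.cos φ) := by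
    have := intervalIntegral.integral_comp_neg (a := (0:ℝ)) (b := π)
      (fun φ => Real.sqrt (l^2 + r^2 + 2*l*r*Real.cos φ))
    simp only [Real.cos_neg, neg_zero] at this
    rw [← this]
  have hi : ∀ a b : ℝ, IntervalIntegrable
      (fun φ => Real.sqrt (l^2 + r^2 + 2*l*r*Real.cos φ)) volume a b := by
    intro a b
    exact (Real.continuous_sqrt.comp (by continuity)).intervalIntegrable a b
  rw [hc, ← intervalIntegral.integral_add_adjacent_intervals (hi (-π) 0) (hi 0 π), hd]
  ring

end Aux

/-- **Elliptic integral formula.** For all `λ ∈ [0,1]`,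
`∫₀¹ E(4λr/(λ+r)²) (λ+r) r/√(1-r²) dr = (π²/8)(λ²/2 + 1)`. -/
theorem ellipticE_integral_formula
    (l : ℝ) (hl : l ∈ Set.Icc (0 : ℝ) 1) :
    ∫ r in Set.Ioo (0 : ℝ) 1,
        ellipticE (4 * l * r / (l + r) ^ 2) * (l + r) * r / Real.sqrt (1 - r ^ 2)
      = Real.pi ^ 2 / 8 * (l ^ 2 / 2 + 1) := by
  open Set intervalIntegral in
  obtain ⟨hl0, hl1⟩ := hl
  have hple : (-π : ℝ) ≤ π := by linarith [pi_pos]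
  -- Step I: pointwise rewriting of the integrand on (0,1)
  have hpt : ∀ r ∈ Ioo (0:ℝ) 1,
      ellipticE (4 * l * r / (l + r) ^ 2) * (l + r) * r / Real.sqrt (1 - r ^ 2)
      = (1/16) * ((∫ β in (-π)..π, ∫ φ in (-π)..π, |l*Real.cos β + r*Real.cos φ|)
          * (r / Real.sqrt (1 - r^2))) := by
    intro r hr
    have h1 : ellipticE (4*l*r/(l+r)^2) * (l+r)
        = (1/16) * ∫ β in (-π)..π, ∫ φ in (-π)..π, |l*Real.cos β + r*Real.cos φ| := by
      rw [step1 l r hl0 hr.1, step2 l r]; ring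
    rw [show ellipticE (4 * l * r / (l + r) ^ 2) * (l + r) * r / Real.sqrt (1 - r ^ 2)
        = (ellipticE (4*l*r/(l+r)^2) * (l+r)) * (r / Real.sqrt (1 - r^2)) by ring, h1]
    ring
  rw [MeasureTheory.setIntegral_congr_fun measurableSet_Ioo hpt,
    MeasureTheory.integral_const_mul]
  -- Step II: Fubini (swap r and β)
  have hswap :
      ∫ r in Ioo (0:ℝ) 1, ((∫ β in (-π)..π, ∫ φ in (-π)..π, |l*Real.cos β + r*Real.cos φ|)
          * (r / Real.sqrt (1 - r^2)))
      = ∫ β in Ioc (-π) π, ∫ r in Ioo (0:ℝ) 1,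
          (∫ φ in (-π)..π, |l*Real.cos β + r*Real.cos φ|) * (r / Real.sqrt (1 - r^2)) := by
    have hmble : AEStronglyMeasurable
        (Function.uncurry fun (r β : ℝ) =>
          (∫ φ in (-π)..π, |l*Real.cos β + r*Real.cos φ|) * (r / Real.sqrt (1 - r^2)))
        ((volume.restrict (Ioo (0:ℝ) 1)).prod (volume.restrict (Ioc (-π) π))) := by
      apply Measurable.aestronglyMeasurable
      apply Measurable.mul
      · have : Continuous (fun p : ℝ × ℝ => ∫ φ in (-π)..π, |l*Real.cos p.2 + p.1*Real.cos φ|) := by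
          apply intervalIntegral.continuous_parametric_intervalIntegral_of_continuous'
          fun_prop
        exact this.measurable
      · apply Measurable.div <;> fun_prop
    have hfin1 : IsFiniteMeasure (volume.restrict (Ioc (-π) π)) := finRestrict _ _
    have hdom : Integrable (fun p : ℝ × ℝ => (p.1 / Real.sqrt (1 - p.1^2)) * (4*π))
        ((volume.restrict (Ioo (0:ℝ) 1)).prod (volume.restrict (Ioc (-π) π))) :=
      Integrable.mul_prod (integrableOn_w.mono_set Ioo_subset_Ioc_self) (integrable_const _)
    have hintg : Integrable
        (Function.uncurry fun (r β : ℝ) =>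
          (∫ φ in (-π)..π, |l*Real.cos β + r*Real.cos φ|) * (r / Real.sqrt (1 - r^2)))
        ((volume.restrict (Ioo (0:ℝ) 1)).prod (volume.restrict (Ioc (-π) π))) := by
      refine hdom.mono' hmble ?_
      
      rw [Measure.prod_restrict]
      filter_upwards [ae_restrict_mem (measurableSet_Ioo.prod measurableSet_Ioc)] with p hp
      obtain ⟨hp1, _⟩ := hp
      have h0 : 0 < p.1 := hp1.1
      have h1 : p.1 < 1 := hp1.2
      have hwnn : 0 ≤ p.1 / Real.sqrt (1 - p.1^2) := div_nonneg h0.le (Real.sqrt_nonneg _)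
      have hPb : abs (∫ φ in (-π)..π, |l*Real.cos p.2 + p.1*Real.cos φ|) ≤ 4*π := by
        have := intervalIntegral.norm_integral_le_of_norm_le_const (a := -π) (b := π)
          (C := 2) (f := fun φ => |l*Real.cos p.2 + p.1*Real.cos φ|) ?_
        · rw [Real.norm_eq_abs] at this
          calc abs (∫ φ in (-π)..π, |l*Real.cos p.2 + p.1*Real.cos φ|) ≤ 2 * |π - (-π)| := this
            _ = 4*π := by rw [abs_of_nonneg (by linarith [pi_pos])]; ring
        · intro x _
          rw [Real.norm_eq_abs, abs_abs]
          have hb1 := abs_cos_le_one p.2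
          have hb2 := abs_cos_le_one x
          calc |l*Real.cos p.2 + p.1*Real.cos x| ≤ |l*Real.cos p.2| + |p.1*Real.cos x| :=
              abs_add_le _ _
            _ ≤ 2 := by
              rw [abs_mul, abs_mul, abs_of_nonneg hl0, abs_of_pos h0]
              nlinarith
      show ‖(∫ φ in (-π)..π, |l*Real.cos p.2 + p.1*Real.cos φ|) * (p.1 / Real.sqrt (1 - p.1^2))‖
        ≤ (p.1 / Real.sqrt (1 - p.1^2)) * (4*π)
      rw [Real.norm_eq_abs, abs_mul, abs_of_nonneg hwnn, mul_comm]
      exact mul_le_mul_of_nonneg_left hPb hwnn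
    have hpre : ∀ r : ℝ,
        (∫ β in (-π)..π, ∫ φ in (-π)..π, |l*Real.cos β + r*Real.cos φ|)
            * (r / Real.sqrt (1 - r^2))
        = ∫ β in Ioc (-π) π,
            (∫ φ in (-π)..π, |l*Real.cos β + r*Real.cos φ|) * (r / Real.sqrt (1 - r^2)) := by
      intro r
      rw [intervalIntegral.integral_of_le hple, ← MeasureTheory.integral_mul_const]
    calc ∫ r in Ioo (0:ℝ) 1,
          ((∫ β in (-π)..π, ∫ φ in (-π)..π, |l*Real.cos β + r*Real.cos φ|)
            * (r / Real.sqrt (1 - r^2)))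
        = ∫ r in Ioo (0:ℝ) 1, ∫ β in Ioc (-π) π,
            (∫ φ in (-π)..π, |l*Real.cos β + r*Real.cos φ|) * (r / Real.sqrt (1 - r^2)) := by
          apply MeasureTheory.setIntegral_congr_fun measurableSet_Ioo
          intro r _
          exact hpre r
      _ = _ := MeasureTheory.integral_integral_swap hintg
  rw [hswap]
  -- Step III: evaluate the inner integral via polar coordinates
  have hinner : ∀ β : ℝ,
      (∫ r in Ioo (0:ℝ) 1,
        (∫ φ in (-π)..π, |l*Real.cos β + r*Real.cos φ|) * (r / Real.sqrt (1 - r^2)))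
      = π * ((l*Real.cos β)^2 + 1) := by
    intro β
    have hcb : |l * Real.cos β| ≤ 1 := by
      rw [abs_mul, abs_of_nonneg hl0]
      have := abs_cos_le_one β
      nlinarith
    rw [← polar_eval (l*Real.cos β) hcb]
    apply MeasureTheory.setIntegral_congr_fun measurableSet_Ioo
    intro r _
    show (∫ φ in (-π)..π, |l*Real.cos β + r*Real.cos φ|) * (r / Real.sqrt (1 - r^2))
      = (r / Real.sqrt (1 - r^2)) * ∫ φ in Ioo (-π) π, |l*Real.cos β + r*Real.cos φ|
    rw [intervalIntegral.integral_of_le hple, MeasureTheory.integral_Ioc_eq_integral_Ioo,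
      mul_comm]
  simp_rw [hinner]
  -- Step IV: the outer β-integral
  rw [← intervalIntegral.integral_of_le hple]
  have : ∫ β in (-π)..π, π * ((l*Real.cos β)^2 + 1)
      = π * (l^2 * ∫ β in (-π)..π, Real.cos β ^ 2) + π * (2*π) := by
    rw [intervalIntegral.integral_const_mul]
    have he : ∀ β : ℝ, (l*Real.cos β)^2 + 1 = l^2 * Real.cos β^2 + 1 := fun β => by ring
    simp_rw [he]
    rw [intervalIntegral.integral_add (f := fun x => l^2 * Real.cos x ^ 2) (g := fun _ => (1:ℝ))
      ((continuous_const.mul (Real.continuous_cos.pow 2)).intervalIntegrable _ _)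
      intervalIntegrable_const]
    rw [intervalIntegral.integral_const_mul, intervalIntegral.integral_const, smul_eq_mul]
    ring
  rw [this, integral_cos_sq]
  simp [Real.sin_pi, Real.cos_pi]
  ring
end

section
/- For every integer d ≥ 2 and every real ρ > 1: ∫_0^π sin^{d−2}(θ) · (ρ² − 2ρ cos(θ) + 1)^{−d/2} dθ = ( ρ^{2−d} / (ρ²−1) ) · √π · Γ((d−1)/2) / Γ(d/2). -/
open MeasureTheory Real intervalIntegral Filter Topology


/-- the squared distance -/
noncomputable def L2 (ρ θ : ℝ) : ℝ := ρ ^ 2 - 2 * ρ * Real.cos θ + 1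

lemma L2_pos {ρ : ℝ} (hρ : 1 < ρ) (θ : ℝ) : 0 < L2 ρ θ := by
  have h2 := Real.cos_le_one θ
  have : (0:ℝ) < (ρ - 1)^2 := by nlinarith
  unfold L2; nlinarith

lemma L2_cont (ρ : ℝ) : Continuous (L2 ρ) := by
  unfold L2; continuity

lemma L2_rpow_cont {ρ : ℝ} (hρ : 1 < ρ) (e : ℝ) : Continuous (fun θ => L2 ρ θ ^ e) :=
  (L2_cont ρ).rpow_const (fun θ => Or.inl (L2_pos hρ θ).ne')

/-- X family -/
noncomputable def XI (ρ : ℝ) (n : ℕ) (e : ℝ) : ℝ := ∫ θ in (0:ℝ)..π, Real.sin θ ^ n * L2 ρ θ ^ e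

/-- Y family (cos-weighted) -/
noncomputable def YI (ρ : ℝ) (n : ℕ) (e : ℝ) : ℝ :=
  ∫ θ in (0:ℝ)..π, Real.sin θ ^ n * Real.cos θ * L2 ρ θ ^ e

lemma X_cont {ρ : ℝ} (hρ : 1 < ρ) (n : ℕ) (e : ℝ) :
    Continuous (fun θ => Real.sin θ ^ n * L2 ρ θ ^ e) :=
  (Real.continuous_sin.pow n).mul (L2_rpow_cont hρ e)

lemma Y_cont {ρ : ℝ} (hρ : 1 < ρ) (n : ℕ) (e : ℝ) :
    Continuous (fun θ => Real.sin θ ^ n * Real.cos θ * L2 ρ θ ^ e) :=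
  ((Real.continuous_sin.pow n).mul Real.continuous_cos).mul (L2_rpow_cont hρ e)

lemma L2_hasDerivAt (ρ θ : ℝ) : HasDerivAt (L2 ρ) (2 * ρ * Real.sin θ) θ := by
  have h : HasDerivAt (fun θ => ρ ^ 2 - 2 * ρ * Real.cos θ + 1)
      (0 - 2 * ρ * (-Real.sin θ) + 0) θ := by
    exact (((hasDerivAt_const θ (ρ^2)).sub ((Real.hasDerivAt_cos θ).const_mul (2*ρ))).add
      (hasDerivAt_const θ 1))
  exact h.congr_deriv (by ring)

lemma L2_rpow_hasDerivAt {ρ : ℝ} (hρ : 1 < ρ) (e θ : ℝ) :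
    HasDerivAt (fun θ => L2 ρ θ ^ e) (2 * ρ * Real.sin θ * e * L2 ρ θ ^ (e - 1)) θ :=
  (L2_hasDerivAt ρ θ).rpow_const (Or.inl (L2_pos hρ θ).ne')

/-- elimination of the cosine weight -/
lemma Y_elim {ρ : ℝ} (hρ : 1 < ρ) (n : ℕ) (e : ℝ) :
    2 * ρ * YI ρ n e = (ρ^2 + 1) * XI ρ n e - XI ρ n (e + 1) := by
  have hρ0 : ρ ≠ 0 := by nlinarith
  have h1 : ∀ θ : ℝ, Real.sin θ ^ n * L2 ρ θ ^ (e+1)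
      = (ρ^2+1) * (Real.sin θ ^ n * L2 ρ θ ^ e) - 2*ρ*(Real.sin θ ^ n * Real.cos θ * L2 ρ θ ^ e) := by
    intro θ
    have : L2 ρ θ ^ (e+1) = L2 ρ θ ^ e * L2 ρ θ := Real.rpow_add_one (L2_pos hρ θ).ne' e
    rw [this]; unfold L2; ring
  unfold XI YI
  rw [intervalIntegral.integral_congr (g := fun θ =>
      (ρ^2+1) * (Real.sin θ ^ n * L2 ρ θ ^ e) - 2*ρ*(Real.sin θ ^ n * Real.cos θ * L2 ρ θ ^ e))
      (fun θ _ => h1 θ)]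
  rw [intervalIntegral.integral_sub ((continuous_const.fun_mul (X_cont hρ n e)).intervalIntegrable 0 π)
      ((continuous_const.fun_mul (Y_cont hρ n e)).intervalIntegrable 0 π),
    intervalIntegral.integral_const_mul, intervalIntegral.integral_const_mul]
  ring

lemma R1 {ρ : ℝ} (hρ : 1 < ρ) (n : ℕ) (e : ℝ) :
    ((n:ℝ)+1) * YI ρ n e + 2*ρ*e * XI ρ (n+2) (e-1) = 0 := by
  have hderiv : ∀ θ ∈ Set.uIcc (0:ℝ) π,
      HasDerivAt (fun θ => Real.sin θ ^ (n+1) * L2 ρ θ ^ e)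
        (((n:ℝ)+1) * (Real.sin θ ^ n * Real.cos θ * L2 ρ θ ^ e)
          + 2*ρ*e * (Real.sin θ ^ (n+2) * L2 ρ θ ^ (e-1))) θ := by
    intro θ _
    have hs : HasDerivAt (fun θ => Real.sin θ ^ (n+1))
        (((n:ℝ)+1) * Real.sin θ ^ n * Real.cos θ) θ := by
      have := (Real.hasDerivAt_sin θ).fun_pow (n+1)
      simpa using this
    have := hs.fun_mul (L2_rpow_hasDerivAt hρ e θ)
    refine this.congr_deriv (Eq.symm ?_)
    rw [pow_succ, pow_succ]
    ring
  have hint : IntervalIntegrable (fun θ =>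
      ((n:ℝ)+1) * (Real.sin θ ^ n * Real.cos θ * L2 ρ θ ^ e)
        + 2*ρ*e * (Real.sin θ ^ (n+2) * L2 ρ θ ^ (e-1))) MeasureTheory.volume 0 π :=
    ((continuous_const.mul (Y_cont hρ n e)).add
      (continuous_const.mul (X_cont hρ (n+2) (e-1)))).intervalIntegrable 0 π
  have := intervalIntegral.integral_eq_sub_of_hasDerivAt hderiv hint
  rw [Real.sin_pi, Real.sin_zero, zero_pow (Nat.succ_ne_zero n), zero_mul, zero_mul, sub_zero] at this
  rw [intervalIntegral.integral_add
    ((continuous_const.fun_mul (Y_cont hρ n e)).intervalIntegrable 0 π)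
    ((continuous_const.fun_mul (X_cont hρ (n+2) (e-1))).intervalIntegrable 0 π),
    intervalIntegral.integral_const_mul, intervalIntegral.integral_const_mul] at this
  unfold XI YI
  exact this

lemma R2 {ρ : ℝ} (hρ : 1 < ρ) (n : ℕ) (e : ℝ) :
    ((n:ℝ)+1) * XI ρ n e - ((n:ℝ)+2) * XI ρ (n+2) e + 2*ρ*e * YI ρ (n+2) (e-1) = 0 := by
  have hderiv : ∀ θ ∈ Set.uIcc (0:ℝ) π,
      HasDerivAt (fun θ => Real.sin θ ^ (n+1) * Real.cos θ * L2 ρ θ ^ e)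
        ((((n:ℝ)+1) * (Real.sin θ ^ n * L2 ρ θ ^ e)
          - ((n:ℝ)+2) * (Real.sin θ ^ (n+2) * L2 ρ θ ^ e))
          + 2*ρ*e * (Real.sin θ ^ (n+2) * Real.cos θ * L2 ρ θ ^ (e-1))) θ := by
    intro θ _
    have hs : HasDerivAt (fun θ => Real.sin θ ^ (n+1))
        (((n:ℝ)+1) * Real.sin θ ^ n * Real.cos θ) θ := by
      have := (Real.hasDerivAt_sin θ).fun_pow (n+1)
      simpa using this
    have := (hs.fun_mul (Real.hasDerivAt_cos θ)).fun_mul (L2_rpow_hasDerivAt hρ e θ)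
    refine this.congr_deriv (Eq.symm ?_)
    linear_combination (-((n:ℝ)+1) * Real.sin θ ^ n * L2 ρ θ ^ e) * (Real.sin_sq_add_cos_sq θ)
  have hint : IntervalIntegrable (fun θ =>
      (((n:ℝ)+1) * (Real.sin θ ^ n * L2 ρ θ ^ e)
        - ((n:ℝ)+2) * (Real.sin θ ^ (n+2) * L2 ρ θ ^ e))
        + 2*ρ*e * (Real.sin θ ^ (n+2) * Real.cos θ * L2 ρ θ ^ (e-1))) MeasureTheory.volume 0 π :=
    (((continuous_const.mul (X_cont hρ n e)).sub
      (continuous_const.mul (X_cont hρ (n+2) e))).add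
      (continuous_const.mul (Y_cont hρ (n+2) (e-1)))).intervalIntegrable 0 π
  have := intervalIntegral.integral_eq_sub_of_hasDerivAt hderiv hint
  rw [Real.sin_pi, Real.sin_zero, zero_pow (Nat.succ_ne_zero n), zero_mul, zero_mul, zero_mul, zero_mul, sub_zero] at this
  rw [intervalIntegral.integral_add
      (((continuous_const.fun_mul (X_cont hρ n e)).fun_sub
        (continuous_const.fun_mul (X_cont hρ (n+2) e))).intervalIntegrable 0 π)
      ((continuous_const.fun_mul (Y_cont hρ (n+2) (e-1))).intervalIntegrable 0 π),
    intervalIntegral.integral_sub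
      ((continuous_const.fun_mul (X_cont hρ n e)).intervalIntegrable 0 π)
      ((continuous_const.fun_mul (X_cont hρ (n+2) e)).intervalIntegrable 0 π),
    intervalIntegral.integral_const_mul, intervalIntegral.integral_const_mul,
    intervalIntegral.integral_const_mul] at this
  unfold XI YI
  exact this

lemma L2_zero (ρ : ℝ) : L2 ρ 0 = (ρ - 1)^2 := by unfold L2; rw [Real.cos_zero]; ring
lemma L2_pi (ρ : ℝ) : L2 ρ π = (ρ + 1)^2 := by unfold L2; rw [Real.cos_pi]; ring

lemma sq_rpow_of_nonneg {x : ℝ} (hx : 0 ≤ x) (a : ℝ) : (x^2) ^ a = x ^ (2*a) := by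
  rw [← Real.rpow_natCast x 2, ← Real.rpow_mul hx]
  norm_num

lemma X1_eval {ρ : ℝ} (hρ : 1 < ρ) (a : ℝ) (ha : a ≠ 0) :
    XI ρ 1 (a-1) = ((ρ+1)^(2*a) - (ρ-1)^(2*a)) / (2*ρ*a) := by
  have hρ0 : ρ ≠ 0 := by nlinarith
  have hderiv : ∀ θ ∈ Set.uIcc (0:ℝ) π,
      HasDerivAt (fun θ => (1/(2*ρ*a)) * L2 ρ θ ^ a)
        (Real.sin θ ^ 1 * L2 ρ θ ^ (a-1)) θ := by
    intro θ _
    have := (L2_rpow_hasDerivAt hρ a θ).const_mul (1/(2*ρ*a))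
    refine this.congr_deriv (Eq.symm ?_)
    field_simp
  have := intervalIntegral.integral_eq_sub_of_hasDerivAt hderiv
    ((X_cont hρ 1 (a-1)).intervalIntegrable 0 π)
  unfold XI
  rw [this, L2_zero, L2_pi, sq_rpow_of_nonneg (by nlinarith : (0:ℝ) ≤ ρ+1) a,
    sq_rpow_of_nonneg (by nlinarith : (0:ℝ) ≤ ρ-1) a]
  ring

lemma Q1 {ρ : ℝ} (hρ : 1 < ρ) : XI ρ 1 (-(1/2)) = 2/ρ := by
  have := X1_eval hρ (1/2) (by norm_num)
  rw [show (1:ℝ)/2 - 1 = -(1/2) by ring] at this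
  rw [this]
  rw [show (2:ℝ)*(1/2) = 1 by ring, Real.rpow_one, Real.rpow_one]
  have hρ0 : ρ ≠ 0 := by nlinarith
  field_simp
  ring

lemma P1 {ρ : ℝ} (hρ : 1 < ρ) : XI ρ 1 (-(3/2)) = 2/(ρ*(ρ^2-1)) := by
  have := X1_eval hρ (-(1/2)) (by norm_num)
  rw [show (-((1:ℝ)/2)) - 1 = -(3/2) by ring] at this
  rw [this, show (2:ℝ)*(-(1/2)) = -1 by ring, Real.rpow_neg_one, Real.rpow_neg_one]
  have h1 : ρ + 1 ≠ 0 := by nlinarith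
  have h2 : ρ - 1 ≠ 0 := by nlinarith
  have hρ0 : ρ ≠ 0 := by nlinarith
  have h3 : ρ^2 - 1 > 0 := by nlinarith
  rw [div_eq_div_iff (by positivity) (by positivity)]
  field_simp
  ring

lemma Q0 {ρ : ℝ} (hρ : 1 < ρ) : XI ρ 0 0 = π := by
  unfold XI
  have : ∀ θ : ℝ, Real.sin θ ^ 0 * L2 ρ θ ^ (0:ℝ) = 1 := by
    intro θ; rw [pow_zero, Real.rpow_zero, mul_one]
  rw [intervalIntegral.integral_congr (g := fun _ => (1:ℝ)) (fun θ _ => this θ)]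
  simp

lemma poisson {ρ : ℝ} (hρ : 1 < ρ) :
    ∫ θ in (0:ℝ)..π, (L2 ρ θ)⁻¹ = π / (ρ^2 - 1) := by
  have hρ1 : ρ - 1 > 0 := by linarith
  have hρ2 : ρ + 1 > 0 := by linarith
  have hsq : ρ^2 - 1 > 0 := by nlinarith
  set k : ℝ := (ρ+1)/(ρ-1) with hk
  have hkpos : 0 < k := by positivity
  set F : ℝ → ℝ := fun b => (2/(ρ^2-1)) * Real.arctan (k * Real.tan (b/2)) with hF
  have hcont : Continuous fun θ => (L2 ρ θ)⁻¹ :=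
    (L2_cont ρ).inv₀ (fun θ => (L2_pos hρ θ).ne')
  -- step 1 : FTC on [0,b] for b < π
  have key : ∀ b ∈ Set.Ico (0:ℝ) π, ∫ θ in (0:ℝ)..b, (L2 ρ θ)⁻¹ = F b := by
    intro b hb
    have hderiv : ∀ θ ∈ Set.uIcc (0:ℝ) b, HasDerivAt F ((L2 ρ θ)⁻¹) θ := by
      intro θ hθ
      rw [Set.uIcc_of_le hb.1] at hθ
      have hθ2 : θ/2 ∈ Set.Ico (0:ℝ) (π/2) :=
        ⟨by linarith [hθ.1], by linarith [hθ.2, hb.2]⟩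
      have hcos : Real.cos (θ/2) ≠ 0 := by
        have := Real.cos_pos_of_mem_Ioo (Set.mem_Ioo.2 ⟨by linarith [hθ2.1, Real.pi_pos], hθ2.2⟩)
        exact this.ne'
      have h1 : HasDerivAt (fun b : ℝ => b/2) (1/2) θ := by
        simpa using (hasDerivAt_id θ).div_const 2
      have h2 : HasDerivAt (fun b : ℝ => Real.tan (b/2)) (1/Real.cos (θ/2)^2 * (1/2)) θ :=
        by have := (Real.hasDerivAt_tan hcos).comp θ h1; exact this
      have h3 : HasDerivAt (fun b : ℝ => k * Real.tan (b/2)) (k * (1/Real.cos (θ/2)^2 * (1/2))) θ :=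
        h2.const_mul k
      have h4 : HasDerivAt (fun b : ℝ => Real.arctan (k * Real.tan (b/2)))
          ((1/(1 + (k * Real.tan (θ/2))^2)) * (k * (1/Real.cos (θ/2)^2 * (1/2)))) θ :=
        by have := (Real.hasDerivAt_arctan (k * Real.tan (θ/2))).comp θ h3; exact this
      have h5 := h4.const_mul (2/(ρ^2-1))
      refine h5.congr_deriv (Eq.symm ?_)
      rw [Real.tan_eq_sin_div_cos]
      have hL2 : L2 ρ θ = (ρ-1)^2 * Real.cos (θ/2)^2 + (ρ+1)^2 * Real.sin (θ/2)^2 := by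
        have hcosθ : Real.cos θ = 2 * Real.cos (θ/2)^2 - 1 := by
          rw [← Real.cos_two_mul]; ring_nf
        unfold L2
        rw [hcosθ]
        linear_combination (-(ρ+1)^2) * (Real.sin_sq_add_cos_sq (θ/2))
      rw [hL2, hk]
      have hc2 : 0 < Real.cos (θ/2)^2 := by positivity
      have hden : (ρ-1)^2 * Real.cos (θ/2)^2 + (ρ+1)^2 * Real.sin (θ/2)^2 > 0 := by
        have h6 := mul_pos (by positivity : (0:ℝ) < (ρ-1)^2) hc2
        nlinarith [mul_nonneg (sq_nonneg (ρ+1)) (sq_nonneg (Real.sin (θ/2)))]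
      field_simp
      ring
    have := intervalIntegral.integral_eq_sub_of_hasDerivAt hderiv
      (hcont.intervalIntegrable 0 b)
    rw [this, hF]
    simp [Real.tan_zero]
  -- step 2 : take limits b → π⁻
  have hG : Tendsto (fun b => ∫ θ in (0:ℝ)..b, (L2 ρ θ)⁻¹) (𝓝[<] π)
      (𝓝 (∫ θ in (0:ℝ)..π, (L2 ρ θ)⁻¹)) := by
    rw [← nhdsWithin_Ico_eq_nhdsLT Real.pi_pos]
    have hco := intervalIntegral.continuousOn_primitive_interval
      (μ := MeasureTheory.volume) (a := 0) (b := π)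
      (hcont.integrableOn_uIcc)
    have := (hco π (by simp [Set.uIcc_of_le Real.pi_pos.le, Real.pi_pos.le])).mono
      (Set.Ico_subset_Icc_self.trans (by rw [Set.uIcc_of_le Real.pi_pos.le]))
    exact this.tendsto
  have hFlim : Tendsto F (𝓝[<] π) (𝓝 (π / (ρ^2-1))) := by
    have half : Tendsto (fun b : ℝ => b/2) (𝓝[<] π) (𝓝[<] (π/2)) := by
      apply tendsto_nhdsWithin_of_tendsto_nhds_of_eventually_within
      · have : Tendsto (fun b : ℝ => b/2) (𝓝 π) (𝓝 (π/2)) :=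
          (continuous_id.div_const 2).tendsto π
        exact this.mono_left nhdsWithin_le_nhds
      · filter_upwards [self_mem_nhdsWithin] with b hb
        simp only [Set.mem_Iio] at hb ⊢
        linarith
    have htan : Tendsto (fun b : ℝ => Real.tan (b/2)) (𝓝[<] π) atTop :=
      Real.tendsto_tan_pi_div_two.comp half
    have hktan : Tendsto (fun b : ℝ => k * Real.tan (b/2)) (𝓝[<] π) atTop :=
      htan.const_mul_atTop hkpos
    have harc : Tendsto (fun b : ℝ => Real.arctan (k * Real.tan (b/2))) (𝓝[<] π) (𝓝 (π/2)) :=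
      (tendsto_nhds_of_tendsto_nhdsWithin Real.tendsto_arctan_atTop).comp hktan
    have := harc.const_mul (2/(ρ^2-1))
    rw [hF]
    convert this using 2
    field_simp
  have heq : (fun b => ∫ θ in (0:ℝ)..b, (L2 ρ θ)⁻¹) =ᶠ[𝓝[<] π] F := by
    filter_upwards [Ioo_mem_nhdsLT_of_mem (Set.mem_Ioc.2 ⟨Real.pi_pos, le_refl π⟩)] with b hb
    exact key b ⟨hb.1.le, hb.2⟩
  exact tendsto_nhds_unique (hG.congr' heq) hFlim


lemma sin_pow_integral (n : ℕ) :
    ∫ x in (0:ℝ)..π, sin x ^ n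
      = Real.sqrt π * Real.Gamma (((n:ℝ) + 1) / 2) / Real.Gamma ((n:ℝ) / 2 + 1) := by
  induction n using Nat.twoStepInduction with
  | zero =>
    simp only [pow_zero, intervalIntegral.integral_const, smul_eq_mul, mul_one,
      Nat.cast_zero, zero_add, zero_div, Real.Gamma_one]
    rw [show ((1:ℝ))/2 = 1/2 by norm_num, Real.Gamma_one_half_eq]
    rw [Real.mul_self_sqrt Real.pi_pos.le]
    ring
  | one =>
    have h32 : Real.Gamma ((1:ℝ)/2 + 1) = (1/2) * Real.Gamma (1/2) :=
      Real.Gamma_add_one (by norm_num)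
    have hs : Real.sqrt π ≠ 0 := by positivity
    simp only [pow_one, integral_sin]
    rw [show ((1:ℕ):ℝ) = 1 by norm_num]
    rw [show ((1:ℝ) + 1)/2 = 1 by ring, Real.Gamma_one, h32, Real.Gamma_one_half_eq]
    field_simp
    norm_num
  | more n ih _ =>
    have key := integral_sin_pow (a := 0) (b := π) n
    have key2 : ∫ x in (0:ℝ)..π, sin x ^ (n+2) = ((n:ℝ)+1)/((n:ℝ)+2) * ∫ x in (0:ℝ)..π, sin x ^ n := by
      rw [key]; simp [Real.sin_pi]
    rw [key2, ih]
    have h1 : Real.Gamma ((((n:ℕ)+2:ℕ):ℝ)/2 + 1) = ((n:ℝ)/2 + 1) * Real.Gamma ((n:ℝ)/2 + 1) := by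
      push_cast
      rw [show ((n:ℝ)+2)/2 + 1 = ((n:ℝ)/2 + 1) + 1 by ring]
      exact Real.Gamma_add_one (by positivity)
    have h2 : Real.Gamma (((((n:ℕ)+2:ℕ):ℝ) + 1)/2) = (((n:ℝ)+1)/2) * Real.Gamma (((n:ℝ)+1)/2) := by
      push_cast
      rw [show ((n:ℝ)+2+1)/2 = (((n:ℝ)+1)/2) + 1 by ring]
      exact Real.Gamma_add_one (by positivity)
    push_cast
    push_cast at h1 h2
    rw [h1, h2]
    have hg1 : Real.Gamma ((n:ℝ)/2 + 1) ≠ 0 := (Real.Gamma_pos_of_pos (by positivity)).ne'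
    field_simp




lemma P0 {ρ : ℝ} (hρ : 1 < ρ) : XI ρ 0 (-1) = π/(ρ^2-1) := by
  unfold XI
  rw [intervalIntegral.integral_congr (g := fun θ => (L2 ρ θ)⁻¹)
    (fun θ _ => by rw [pow_zero, one_mul, Real.rpow_neg_one])]
  exact poisson hρ

lemma sin_pow_succ_succ (n : ℕ) :
    ∫ x in (0:ℝ)..π, Real.sin x ^ (n+2)
      = ((n:ℝ)+1)/((n:ℝ)+2) * ∫ x in (0:ℝ)..π, Real.sin x ^ n := by
  rw [integral_sin_pow n]; simp [Real.sin_pi]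

lemma PQ_aux {ρ : ℝ} (hρ : 1 < ρ) (n : ℕ) :
    XI ρ n (-((n:ℝ)+2)/2) = (∫ x in (0:ℝ)..π, Real.sin x ^ n) / (ρ^n * (ρ^2-1))
  ∧ XI ρ n (-(n:ℝ)/2) = (∫ x in (0:ℝ)..π, Real.sin x ^ n) / ρ^n := by
  have hρpos : (0:ℝ) < ρ := by linarith
  have hρ0 : ρ ≠ 0 := hρpos.ne'
  have hsq : (0:ℝ) < ρ^2 - 1 := by nlinarith
  induction n using Nat.twoStepInduction with
  | zero =>
    constructor
    · rw [show -(((0:ℕ):ℝ)+2)/2 = (-1:ℝ) by norm_num, P0 hρ]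
      norm_num
    · rw [show -(((0:ℕ):ℝ))/2 = (0:ℝ) by norm_num, Q0 hρ]
      norm_num
  | one =>
    constructor
    · rw [show -(((1:ℕ):ℝ)+2)/2 = -(3/2 : ℝ) by norm_num, P1 hρ]
      simp [integral_sin]
      norm_num
    · rw [show -(((1:ℕ):ℝ))/2 = -(1/2 : ℝ) by norm_num, Q1 hρ]
      simp [integral_sin]
      norm_num
  | more n ih _ =>
    obtain ⟨hP, hQ⟩ := ih
    have hn2 : ((n:ℝ)+2) ≠ 0 := by positivity
    have hρn : (ρ:ℝ)^n ≠ 0 := pow_ne_zero n hρ0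
    have hD : (ρ:ℝ)^n * (ρ^2-1) ≠ 0 := by positivity
    have hD2 : (ρ:ℝ)^(n+2) * (ρ^2-1) ≠ 0 := by positivity
    have hρn2 : (ρ:ℝ)^(n+2) ≠ 0 := pow_ne_zero _ hρ0
    have hSrec := sin_pow_succ_succ n
    have h1 := R1 hρ n (-((n:ℝ)+2)/2)
    have h2 := Y_elim hρ n (-((n:ℝ)+2)/2)
    have h3 := R2 hρ n (-((n:ℝ)+2)/2)
    have h4 := Y_elim hρ (n+2) (-((n:ℝ)+2)/2 - 1)
    rw [show -((n:ℝ)+2)/2 - 1 = -((n:ℝ)+2+2)/2 by ring] at h1 h3 h4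
    rw [show -((n:ℝ)+2)/2 + 1 = -(n:ℝ)/2 by ring] at h2
    rw [show -((n:ℝ)+2+2)/2 + 1 = -((n:ℝ)+2)/2 by ring] at h4
    set S : ℝ := ∫ x in (0:ℝ)..π, Real.sin x ^ n with hS
    set A := XI ρ n (-((n:ℝ)+2)/2) with hA
    set Bq := XI ρ n (-(n:ℝ)/2) with hBq
    set y := YI ρ n (-((n:ℝ)+2)/2) with hy0
    set P2 := XI ρ (n+2) (-((n:ℝ)+2+2)/2) with hP2
    set Q2 := XI ρ (n+2) (-((n:ℝ)+2)/2) with hQ2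
    set y2 := YI ρ (n+2) (-((n:ℝ)+2+2)/2) with hy2
    have hP' : A * (ρ^n * (ρ^2-1)) = S := by rw [hP]; exact div_mul_cancel₀ S hD
    have hQ' : Bq * ρ^n = S := by rw [hQ]; exact div_mul_cancel₀ S hρn
    have hy'' : y * (ρ^(n+1) * (ρ^2-1)) = S := by
      linear_combination (ρ^n*(ρ^2-1)/2) * h2 + ((ρ^2+1)/2) * hP' - ((ρ^2-1)/2) * hQ'
    have goal1' : P2 * (ρ^(n+2) * (ρ^2-1) * ((n:ℝ)+2)) = ((n:ℝ)+1) * S := by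
      linear_combination (-(ρ^(n+1)*(ρ^2-1))) * h1 + ((n:ℝ)+1) * hy''
    have goal2'' : Q2 * (ρ^(n+2) * ((n:ℝ)+2)) * (ρ^2-1) = (((n:ℝ)+1) * S) * (ρ^2-1) := by
      linear_combination (-2*ρ^(n+2)*(ρ^2-1)) * h3 + (-((n:ℝ)+2)*ρ^(n+2)*(ρ^2-1)) * h4
        + (2*ρ^2*((n:ℝ)+1)) * hP' + (-(ρ^2+1)) * goal1'
    have goal2' : Q2 * (ρ^(n+2) * ((n:ℝ)+2)) = ((n:ℝ)+1) * S :=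
      mul_right_cancel₀ hsq.ne' goal2''
    constructor
    · push_cast
      rw [← hP2, hSrec, eq_div_iff hD2, div_mul_eq_mul_div, eq_div_iff hn2]
      linear_combination goal1'
    · push_cast
      rw [← hQ2, hSrec, eq_div_iff hρn2, div_mul_eq_mul_div, eq_div_iff hn2]
      linear_combination goal2'


/-- **Trigonometric integral** (key step in the proof of Riesz's formula). For every integer
`d ≥ 2` and real `ρ > 1`,
`∫₀^π sin^{d-2}θ (ρ² - 2ρcosθ + 1)^{-d/2} dθ = (ρ^{2-d}/(ρ²-1)) √π Γ((d-1)/2)/Γ(d/2)`. -/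
theorem trigonometric_integral_identity
    (d : ℕ) (hd : 2 ≤ d) (ρ : ℝ) (hρ : 1 < ρ) :
    ∫ θ in Set.Ioo (0 : ℝ) Real.pi,
        Real.sin θ ^ (d - 2) * (ρ ^ 2 - 2 * ρ * Real.cos θ + 1) ^ (-((d : ℝ) / 2))
      = ρ ^ (2 - (d : ℝ)) / (ρ ^ 2 - 1)
          * Real.sqrt Real.pi * Real.Gamma (((d : ℝ) - 1) / 2) / Real.Gamma ((d : ℝ) / 2) := by
  obtain ⟨n, rfl⟩ : ∃ n, d = n + 2 := ⟨d - 2, by omega⟩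
  have hρpos : (0:ℝ) < ρ := by linarith
  have hsq : (0:ℝ) < ρ^2 - 1 := by nlinarith
  have hn2 : (n + 2 - 2 : ℕ) = n := by omega
  have he : (-((((n+2:ℕ)):ℝ)/2)) = -((n:ℝ)+2)/2 := by push_cast; ring
  have hL : (∫ θ in Set.Ioo (0 : ℝ) Real.pi,
      Real.sin θ ^ ((n+2) - 2) * (ρ ^ 2 - 2 * ρ * Real.cos θ + 1) ^ (-(((n+2:ℕ) : ℝ) / 2)))
      = XI ρ n (-((n:ℝ)+2)/2) := by
    rw [hn2, he]
    unfold XI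
    rw [intervalIntegral.integral_of_le Real.pi_pos.le,
      MeasureTheory.integral_Ioc_eq_integral_Ioo]
    rfl
  rw [hL, (PQ_aux hρ n).1, sin_pow_integral n]
  have hrpow : ρ ^ (2 - (((n+2:ℕ)):ℝ)) = (ρ^n)⁻¹ := by
    rw [show (2 - (((n+2:ℕ)):ℝ)) = -(n:ℝ) by push_cast; ring,
      Real.rpow_neg hρpos.le, Real.rpow_natCast]
  rw [hrpow]
  have h1 : ((((n+2:ℕ)):ℝ) - 1)/2 = ((n:ℝ)+1)/2 := by push_cast; ring
  have h2 : ((((n+2:ℕ)):ℝ))/2 = (n:ℝ)/2 + 1 := by push_cast; ring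
  rw [h1, h2]
  have hΓ : Real.Gamma ((n:ℝ)/2 + 1) ≠ 0 := (Real.Gamma_pos_of_pos (by positivity)).ne'
  have hρn : (ρ:ℝ)^n ≠ 0 := pow_ne_zero n hρpos.ne'
  field_simp
end
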